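/- Let H be a complex Hilbert space and let C, A be bounded self-adjoint operators on H with A² = 1 and (CA)² = −1/4. For real numbers λ_e, λ_n with λ_e² − λ_n² ≠ 0, set Λ_± = (∓λ_n A + λ_e)/(λ_e² − λ_n²) ± C. Then Λ₊Λ₋ = Λ₋Λ₊ = (1/(λ_e² − λ_n²) − 1/4)·Id + (λ_n/(λ_e² − λ_n²) − CA)·{C, A}, where {C, A} = CA + AC is the anticommutator. -/
import Mathlib

theorem Lambda_pm_product {H : Type*} [NormedAddCommGroup H] [InnerProductSpace ℂ H]
    [CompleteSpace H] (C A : H →L[ℂ] H) (hC : IsSelfAdjoint C) (hA : IsSelfAdjoint A)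
    (hA2 : A * A = 1) (hCA : (C * A) * (C * A) = (-(1 / 4) : ℂ) • (1 : H →L[ℂ] H))
    (lam_e lam_n : ℝ) (h : lam_e ^ 2 - lam_n ^ 2 ≠ 0) :
    let Λp : H →L[ℂ] H :=
      ((lam_e ^ 2 - lam_n ^ 2 : ℂ))⁻¹ • ((-(lam_n : ℂ)) • A + (lam_e : ℂ) • 1) + C
    let Λm : H →L[ℂ] H :=
      ((lam_e ^ 2 - lam_n ^ 2 : ℂ))⁻¹ • ((lam_n : ℂ) • A + (lam_e : ℂ) • 1) - C
    Λp * Λm = Λm * Λp ∧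
    Λp * Λm = ((1 / (lam_e ^ 2 - lam_n ^ 2) - 1 / 4 : ℂ)) • (1 : H →L[ℂ] H)
      + (((lam_n / (lam_e ^ 2 - lam_n ^ 2) : ℂ)) • (1 : H →L[ℂ] H) - C * A) * (C * A + A * C) := by
  intro Λp Λm
  have hd : ((lam_e : ℂ) ^ 2 - (lam_n : ℂ) ^ 2) ≠ 0 := by exact_mod_cast h
  set s : ℂ := ((lam_e : ℂ) ^ 2 - (lam_n : ℂ) ^ 2)⁻¹ with hs
  set n : ℂ := (lam_n : ℂ)
  set e : ℂ := (lam_e : ℂ)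
  -- C² = CA{C,A} + 1/4
  have h1 : (C * A) * (C * A + A * C) = (C * A) * (C * A) + C * (A * A) * C := by
    noncomm_ring
  rw [hCA, hA2] at h1
  have hC2 : C * C = (C * A) * (C * A + A * C) + ((1 / 4 : ℂ)) • 1 := by
    rw [h1, mul_one]; module
  have hcancel : s * (e ^ 2 - n ^ 2) = 1 := inv_mul_cancel₀ hd
  have hco : s * s * e ^ 2 - s * s * n ^ 2 = s := by
    have h' : s * s * e ^ 2 - s * s * n ^ 2 = s * (s * (e ^ 2 - n ^ 2)) := by ring
    rw [h', hcancel, mul_one]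
  have step1 : Λp * Λm = (s * s * e ^ 2) • (1 : H →L[ℂ] H) - (s * s * n ^ 2) • (A * A)
      + (s * n) • (A * C + C * A) - C * C := by
    show (s • ((-n) • A + e • 1) + C) * (s • (n • A + e • 1) - C) = _
    simp only [add_mul, mul_add, sub_mul, mul_sub, smul_mul_assoc, mul_smul_comm, smul_add,
      smul_sub, smul_smul, one_mul, mul_one, neg_mul, mul_neg, neg_smul, smul_neg]
    module
  have step2 : Λm * Λp = (s * s * e ^ 2) • (1 : H →L[ℂ] H) - (s * s * n ^ 2) • (A * A)
      + (s * n) • (A * C + C * A) - C * C := by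
    show (s • (n • A + e • 1) - C) * (s • ((-n) • A + e • 1) + C) = _
    simp only [add_mul, mul_add, sub_mul, mul_sub, smul_mul_assoc, mul_smul_comm, smul_add,
      smul_sub, smul_smul, one_mul, mul_one, neg_mul, mul_neg, neg_smul, smul_neg]
    module
  have step1' : Λp * Λm = s • (1 : H →L[ℂ] H) + (s * n) • (A * C + C * A) - C * C := by
    rw [step1, hA2, ← sub_smul, hco]
  have hdiv1 : (1 / (e ^ 2 - n ^ 2) : ℂ) = s := by rw [one_div]
  have hdiv2 : (n / (e ^ 2 - n ^ 2) : ℂ) = n * s := by rw [div_eq_mul_inv]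
  refine ⟨by rw [step1, step2], ?_⟩
  rw [step1', hC2, hdiv1, hdiv2]
  simp only [add_mul, mul_add, sub_mul, mul_sub, smul_mul_assoc, mul_smul_comm, smul_add,
    smul_sub, smul_smul, one_mul, mul_one, neg_mul, mul_neg, neg_smul, smul_neg]
  module
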